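/- Let D = P ∪ L be a dominating set in a projective plane of order q with |D| ≤ (5q−3)/2, such that at most q−1 lines of L pass through any common point and every line meets P in at most q−1 points (D is non-primal). Then the maximal secant length k of P satisfies k ≤ |P| − q + 1, and the maximal concurrency c of L satisfies c ≤ |L| − q + 1. -/

import Mathlib

open Configuration

/-- `Ps ∪ Ls` is a dominating set of the incidence graph. -/
def IsDominating {P L : Type*} [Membership P L] (Ps : Set P) (Ls : Set L) : Prop :=
  (∀ l : L, l ∈ Ls ∨ ∃ p ∈ Ps, p ∈ l) ∧ (∀ p : P, p ∈ Ps ∨ ∃ l ∈ Ls, p ∈ l)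

open Configuration.ProjectivePlane Configuration.Nondegenerate Finset in
theorem key_secant {P L : Type*} [Membership P L] [ProjectivePlane P L]
    [Fintype P] [Fintype L] {q : ℕ} (hq : ProjectivePlane.order P L = q)
    (Ps : Set P) (Ls : Set L) (hdom : IsDominating Ps Ls)
    (hnpP : ∀ l : L, ({p ∈ Ps | p ∈ l}).ncard ≤ q - 1)
    (hsize : 2 * ((Ps.ncard : ℤ) + Ls.ncard) ≤ 5 * q - 3)
    {k : ℕ} {l : L} (hl : ({p ∈ Ps | p ∈ l}).ncard = k) :
    (k : ℤ) ≤ (Ps.ncard : ℤ) - q + 1 := by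
  classical
  by_contra hcon
  push_neg at hcon
  have hq2 : 2 ≤ q := hq ▸ one_lt_order P L
  set PsF : Finset P := Ps.toFinset with hPsF
  set LsF : Finset L := Ls.toFinset with hLsF
  have hPcard : Ps.ncard = PsF.card := Set.ncard_eq_toFinset_card' Ps
  have hLcard : Ls.ncard = LsF.card := Set.ncard_eq_toFinset_card' Ls
  -- secant cardinality as finset
  have hsec : ∀ m : L, ({p ∈ Ps | p ∈ m}).ncard = (PsF.filter (fun p => p ∈ m)).card := by
    intro m
    rw [show {p ∈ Ps | p ∈ m} = ↑(PsF.filter (fun p => p ∈ m)) by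
      ext p; simp [hPsF, Set.mem_toFinset]]
    exact Set.ncard_coe_finset _
  have hkl : (PsF.filter (fun p => p ∈ l)).card = k := by rw [← hsec]; exact hl
  -- points of Ps off l
  set S : Finset P := PsF.filter (fun p => ¬ p ∈ l) with hS
  set s : ℕ := S.card with hs
  have hps : PsF.card = k + s := by
    rw [← hkl, hs, hS]; exact (Finset.card_filter_add_card_filter_not _).symm
  -- points of l not in Ps
  set W : Finset P := Finset.univ.filter (fun p => p ∈ l ∧ p ∉ Ps) with hW
  have hlineCount : ∀ Q : P, (Finset.univ.filter (fun m : L => Q ∈ m)).card = q + 1 := by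
    intro Q
    have := lineCount_eq L Q
    rwa [hq, lineCount, Nat.card_eq_fintype_card, Fintype.card_subtype] at this
  have hpointCount : ∀ m : L, (Finset.univ.filter (fun p : P => p ∈ m)).card = q + 1 := by
    intro m
    have := pointCount_eq P m
    rwa [hq, pointCount, Nat.card_eq_fintype_card, Fintype.card_subtype] at this
  have hWk : k + W.card = q + 1 := by
    rw [← hpointCount l, ← hkl]
    have h1 : PsF.filter (fun p => p ∈ l) =
        (Finset.univ.filter (fun p : P => p ∈ l)).filter (fun p => p ∈ Ps) := by
      ext p; simp [hPsF, Set.mem_toFinset, and_comm]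
    have h2 : W = (Finset.univ.filter (fun p : P => p ∈ l)).filter (fun p => p ∉ Ps) := by
      ext p; simp [hW]
    rw [h1, h2]
    exact Finset.card_filter_add_card_filter_not _
  -- the lines of Ls through Q other than l
  set T : P → Finset L := fun Q => Finset.univ.filter (fun m => m ∈ Ls ∧ Q ∈ m ∧ m ≠ l) with hT
  -- Step A
  have stepA : ∀ Q ∈ W, q ≤ (T Q).card + s := by
    intro Q hQ
    simp only [hW, Finset.mem_filter, Finset.mem_univ, true_and] at hQ
    obtain ⟨hQl, hQPs⟩ := hQ
    set B : Finset L := Finset.univ.filter (fun m => Q ∈ m ∧ m ≠ l ∧ m ∉ Ls) with hB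
    have hsub : Finset.univ.filter (fun m : L => Q ∈ m) ⊆ insert l (T Q ∪ B) := by
      intro m hm
      simp only [Finset.mem_filter, Finset.mem_univ, true_and] at hm
      by_cases hml : m = l
      · simp [hml]
      by_cases hmLs : m ∈ Ls
      · exact Finset.mem_insert_of_mem (Finset.mem_union_left _ (by simp [hT, hm, hml, hmLs]))
      · exact Finset.mem_insert_of_mem (Finset.mem_union_right _ (by simp [hB, hm, hml, hmLs]))
    have hBcard : B.card ≤ s := by
      set g : L → P := fun m => if h : ∃ p ∈ Ps, p ∈ m then h.choose else Q with hg
      apply Finset.card_le_card_of_injOn g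
      · intro m hm
        simp only [hB, Finset.mem_coe, Finset.mem_filter, Finset.mem_univ, true_and] at hm
        obtain ⟨hQm, hml, hmLs⟩ := hm
        have hex : ∃ p ∈ Ps, p ∈ m := (hdom.1 m).resolve_left hmLs
        have hgm : g m ∈ Ps ∧ g m ∈ m := by
          simp only [hg, dif_pos hex]; exact ⟨hex.choose_spec.1, hex.choose_spec.2⟩
        refine Finset.mem_filter.mpr ⟨by simpa [hPsF] using hgm.1, fun hgl => ?_⟩
        have hne : g m ≠ Q := fun h => hQPs (h ▸ hgm.1)
        exact hml ((eq_or_eq hgm.2 hQm hgl hQl).resolve_left hne)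
      · intro m₁ hm₁ m₂ hm₂ he
        simp only [hB, Finset.mem_coe, Finset.mem_filter, Finset.mem_univ, true_and] at hm₁ hm₂
        have hex₁ : ∃ p ∈ Ps, p ∈ m₁ := (hdom.1 m₁).resolve_left hm₁.2.2
        have hex₂ : ∃ p ∈ Ps, p ∈ m₂ := (hdom.1 m₂).resolve_left hm₂.2.2
        have h₁ : g m₁ ∈ Ps ∧ g m₁ ∈ m₁ := by
          simp only [hg, dif_pos hex₁]; exact ⟨hex₁.choose_spec.1, hex₁.choose_spec.2⟩
        have h₂ : g m₂ ∈ m₂ := by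
          simp only [hg, dif_pos hex₂]; exact hex₂.choose_spec.2
        have hne : g m₁ ≠ Q := fun h => hQPs (h ▸ h₁.1)
        exact (eq_or_eq h₁.2 hm₁.1 (he ▸ h₂) hm₂.1).resolve_left hne
    have hcalc : q + 1 ≤ (T Q).card + s + 1 :=
      calc q + 1 = (Finset.univ.filter (fun m : L => Q ∈ m)).card := (hlineCount Q).symm
        _ ≤ (insert l (T Q ∪ B)).card := Finset.card_le_card hsub
        _ ≤ (T Q ∪ B).card + 1 := Finset.card_insert_le _ _
        _ ≤ (T Q).card + B.card + 1 := by gcongr; exact Finset.card_union_le _ _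
        _ ≤ (T Q).card + s + 1 := by gcongr
    omega
  -- Step B
  have hTsub : ∀ Q, T Q ⊆ LsF := by
    intro Q m hm
    simp only [hT, Finset.mem_filter] at hm
    simp [hLsF, Set.mem_toFinset, hm.2.1]
  have hdisj : ∀ Q₁ ∈ W, ∀ Q₂ ∈ W, Q₁ ≠ Q₂ → Disjoint (T Q₁) (T Q₂) := by
    intro Q₁ h₁ Q₂ h₂ hne
    simp only [hW, Finset.mem_filter, Finset.mem_univ, true_and] at h₁ h₂
    rw [Finset.disjoint_left]
    intro m hm₁ hm₂
    simp only [hT, Finset.mem_filter, Finset.mem_univ, true_and] at hm₁ hm₂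
    exact hm₁.2.2 ((eq_or_eq hm₁.2.1 hm₂.2.1 h₁.1 h₂.1).resolve_left hne)
  have stepB : W.card * q ≤ LsF.card + W.card * s := by
    have h1 : (W.biUnion T).card = ∑ Q ∈ W, (T Q).card := Finset.card_biUnion hdisj
    have h2 : (W.biUnion T).card ≤ LsF.card :=
      Finset.card_le_card (Finset.biUnion_subset.mpr (fun Q _ => hTsub Q))
    have h3 : W.card * q ≤ ∑ Q ∈ W, ((T Q).card + s) :=
      calc W.card * q = ∑ _Q ∈ W, q := by rw [Finset.sum_const, smul_eq_mul]
        _ ≤ ∑ Q ∈ W, ((T Q).card + s) := Finset.sum_le_sum stepA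
    rw [Finset.sum_add_distrib, Finset.sum_const, smul_eq_mul] at h3
    omega
  -- Step C
  have stepC : q * q ≤ LsF.card * q + s := by
    set N : Finset P := Finset.univ.filter (fun p => ¬ p ∈ l) with hN
    set O : Finset P := N.filter (fun p => p ∉ Ps) with hO
    have hcardP : Fintype.card P = q * q + q + 1 := by
      have := card_points P L; rw [hq, pow_two] at this; omega
    have hNcard : (q + 1) + N.card = q * q + q + 1 := by
      rw [← hcardP, ← hpointCount l, hN]
      rw [← Finset.card_univ]
      exact Finset.card_filter_add_card_filter_not _
    have hSN : (N.filter (fun p => p ∈ Ps)).card = s := by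
      congr 1
      ext p; simp [hN, hS, hPsF, Set.mem_toFinset, and_comm]
    have hOcard : O.card + s = q * q := by
      have hsplit : s + O.card = N.card := by
        rw [← hSN, hO]
        exact Finset.card_filter_add_card_filter_not _
      omega
    have hcover : O ⊆ LsF.biUnion (fun m => Finset.univ.filter (fun p => p ∈ m ∧ ¬ p ∈ l)) := by
      intro p hp
      simp only [hO, hN, Finset.mem_filter, Finset.mem_univ, true_and] at hp
      obtain ⟨m, hmLs, hpm⟩ := (hdom.2 p).resolve_left hp.2
      rw [Finset.mem_biUnion]
      exact ⟨m, by simp [hLsF, Set.mem_toFinset, hmLs], by simp [hpm, hp.1]⟩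
    have hfib : ∀ m ∈ LsF, (Finset.univ.filter (fun p : P => p ∈ m ∧ ¬ p ∈ l)).card ≤ q := by
      intro m _
      by_cases hml : m = l
      · simp [hml]
      · have hx := HasPoints.mkPoint_ax (P := P) hml
        have hsub2 : Finset.univ.filter (fun p : P => p ∈ m ∧ ¬ p ∈ l) ⊆
            (Finset.univ.filter (fun p : P => p ∈ m)).erase (HasPoints.mkPoint hml) := by
          intro p hp
          simp only [Finset.mem_filter, Finset.mem_univ, true_and] at hp
          rw [Finset.mem_erase]
          exact ⟨fun h => hp.2 (h ▸ hx.2), by simp [hp.1]⟩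
        have := Finset.card_le_card hsub2
        rw [Finset.card_erase_of_mem (by simp [hx.1]), hpointCount m] at this
        omega
    calc q * q = O.card + s := hOcard.symm
      _ ≤ (LsF.biUnion (fun m => Finset.univ.filter (fun p => p ∈ m ∧ ¬ p ∈ l))).card + s :=
          Nat.add_le_add_right (Finset.card_le_card hcover) s
      _ ≤ (∑ m ∈ LsF, (Finset.univ.filter (fun p => p ∈ m ∧ ¬ p ∈ l)).card) + s :=
          Nat.add_le_add_right Finset.card_biUnion_le s
      _ ≤ LsF.card * q + s := by
          have hsum := Finset.sum_le_card_nsmul LsF _ q hfib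
          rw [smul_eq_mul] at hsum
          exact Nat.add_le_add_right hsum s
  -- final arithmetic over ℤ
  have hkq : k ≤ q - 1 := hl ▸ hnpP l
  rw [hPcard] at hcon
  have h3 : (k : ℤ) + 1 ≤ q := by omega
  have h4 : (s : ℤ) + 2 ≤ q := by
    have : (PsF.card : ℤ) = k + s := by exact_mod_cast hps
    omega
  have h1 : (k : ℤ) + (W.card : ℤ) = q + 1 := by exact_mod_cast hWk
  have h5 : (W.card : ℤ) * q ≤ (LsF.card : ℤ) + (W.card : ℤ) * s := by exact_mod_cast stepB
  have h6 : (q : ℤ) * q ≤ (LsF.card : ℤ) * q + s := by exact_mod_cast stepC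
  have h7 : 2 * (((k : ℤ) + s) + LsF.card) ≤ 5 * q - 3 := by
    rw [hPcard, hLcard] at hsize
    have : (PsF.card : ℤ) = k + s := by exact_mod_cast hps
    omega
  have ha : 2 ≤ (W.card : ℤ) := by omega
  have hb : 2 ≤ (q : ℤ) - s := by omega
  have hLq : (q : ℤ) ≤ LsF.card := by
    by_contra hL
    push_neg at hL
    have hle : (LsF.card : ℤ) ≤ (q : ℤ) - 1 := by omega
    have h9 : (LsF.card : ℤ) * q ≤ ((q : ℤ) - 1) * q :=
      mul_le_mul_of_nonneg_right hle (by positivity)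
    have hexp0 : ((q : ℤ) - 1) * q = (q : ℤ) * q - q := by ring
    linarith
  have hab : (W.card : ℤ) * ((q : ℤ) - s) ≤ LsF.card := by
    have hexp : (W.card : ℤ) * ((q : ℤ) - s) = (W.card : ℤ) * q - (W.card : ℤ) * s := by ring
    linarith
  have h8 : 2 * (W.card : ℤ) + 2 * ((q : ℤ) - s) - 4 ≤ (W.card : ℤ) * ((q : ℤ) - s) := by
    have hmul : (0:ℤ) ≤ ((W.card : ℤ) - 2) * (((q : ℤ) - s) - 2) :=
      mul_nonneg (by linarith) (by linarith)
    have hexp2 : ((W.card : ℤ) - 2) * (((q : ℤ) - s) - 2) =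
        (W.card : ℤ) * ((q : ℤ) - s) - 2 * (W.card : ℤ) - 2 * ((q : ℤ) - s) + 4 := by ring
    linarith
  linarith

/-- For a non-primal dominating set of size at most `(5q-3)/2`, the maximal secant
length `k` of `Ps` satisfies `k ≤ |Ps| - q + 1` and the maximal concurrency `c` of
`Ls` satisfies `c ≤ |Ls| - q + 1`. -/
theorem nagyszelo {P L : Type*} [Membership P L] [ProjectivePlane P L]
    [Fintype P] [Fintype L] {q : ℕ} (hq : ProjectivePlane.order P L = q)
    (Ps : Set P) (Ls : Set L) (hdom : IsDominating Ps Ls)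
    (hnpP : ∀ l : L, ({p ∈ Ps | p ∈ l}).ncard ≤ q - 1)
    (hnpL : ∀ p : P, ({l ∈ Ls | p ∈ l}).ncard ≤ q - 1)
    (hsize : 2 * ((Ps.ncard : ℤ) + Ls.ncard) ≤ 5 * q - 3)
    (k : ℕ) (hk : IsGreatest {n : ℕ | ∃ l : L, ({p ∈ Ps | p ∈ l}).ncard = n} k)
    (c : ℕ) (hc : IsGreatest {n : ℕ | ∃ p : P, ({l ∈ Ls | p ∈ l}).ncard = n} c) :
    (k : ℤ) ≤ (Ps.ncard : ℤ) - q + 1 ∧ (c : ℤ) ≤ (Ls.ncard : ℤ) - q + 1 := by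
  constructor
  · obtain ⟨l, hl⟩ := hk.1
    exact key_secant hq Ps Ls hdom hnpP hsize hl
  · obtain ⟨p, hp⟩ := hc.1
    have hq' : ProjectivePlane.order (Dual L) (Dual P) = q := (ProjectivePlane.Dual.order P L).trans hq
    have hdom' : IsDominating (P := Dual L) (L := Dual P) Ls Ps := ⟨hdom.2, hdom.1⟩
    have hsize' : 2 * (((Ls : Set (Dual L)).ncard : ℤ) + (Ps : Set (Dual P)).ncard) ≤ 5 * q - 3 := by
      show 2 * ((Ls.ncard : ℤ) + Ps.ncard) ≤ 5 * q - 3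
      linarith
    exact key_secant (P := Dual L) (L := Dual P) hq' Ls Ps hdom'
      (fun lp => hnpL lp) hsize' (l := (p : Dual P)) hp
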